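/- Let ε ∈ (0, 1/12] and n > 0 be real numbers, let q be a real number with n/(3(1 − 6ε)) ≤ q ≤ n, and let s be a real number with 0 ≤ s ≤ (2/3)·n. Then (3(1 − 6ε)/(4n))·q² − ((1 − 6ε)/2)·q + ((5 − 6ε)/12)·n − ((1 − 6ε)/(4n))·s² ≥ (1 + 14ε)·n/12. -/

import Mathlib

/-- Expectation core of the second item of the lemma controlling the
undecided agents when their number exceeds n/(3(1−6ε)) and the bias is at
most (2/3)n (p = 1/6 + ε). -/
theorem undecided_lower_bound_many_undecided
    (ε n q s : ℝ) (hε0 : 0 < ε) (hε1 : ε ≤ 1 / 12) (hn : 0 < n)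
    (hq0 : n / (3 * (1 - 6 * ε)) ≤ q) (hq1 : q ≤ n)
    (hs0 : 0 ≤ s) (hs1 : s ≤ (2 / 3) * n) :
    (3 * (1 - 6 * ε) / (4 * n)) * q ^ 2 - ((1 - 6 * ε) / 2) * q
        + ((5 - 6 * ε) / 12) * n - ((1 - 6 * ε) / (4 * n)) * s ^ 2
      ≥ (1 + 14 * ε) * n / 12 := by
  have hc : (0:ℝ) < 1 - 6 * ε := by nlinarith
  have hq0' : n ≤ 3 * (1 - 6 * ε) * q := by
    rw [div_le_iff₀ (by positivity)] at hq0; linarith [hq0]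
  have hs2 : s ^ 2 ≤ (4 / 9) * n ^ 2 := by nlinarith
  rw [ge_iff_le, div_le_iff₀ (by norm_num : (0:ℝ) < 12), ← sub_nonneg]
  have key : (3 * (1 - 6 * ε) / (4 * n)) * q ^ 2 - ((1 - 6 * ε) / 2) * q
        + ((5 - 6 * ε) / 12) * n - ((1 - 6 * ε) / (4 * n)) * s ^ 2
      = (3 * (1 - 6 * ε) * q ^ 2 - 2 * (1 - 6 * ε) * n * q
          + (5 - 6 * ε) / 3 * n ^ 2 - (1 - 6 * ε) * s ^ 2) / (4 * n) := by
    field_simp; ring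
  rw [key]
  have h4n : (0:ℝ) < 4 * n := by linarith
  rw [div_mul_eq_mul_div, div_sub' (ne_of_gt h4n)]
  apply div_nonneg _ (le_of_lt h4n)
  nlinarith [mul_nonneg (sub_nonneg.mpr hq0') (by nlinarith : (0:ℝ) ≤ 3 * (1 - 6 * ε) * q + n - 2 * (1 - 6 * ε) * n),
    mul_nonneg hc.le (sub_nonneg.mpr hs2), sq_nonneg (1 - 6 * ε), sq_nonneg n,
    mul_pos hn hn, mul_nonneg hc.le hn.le, sq_nonneg (3 * (1 - 6 * ε) - 1)]
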